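/- With notation as before ($\Lambda, C_4, C_p, |\lambda_3| > 0$, $2<p<10/3$, $\gamma_p = \frac{3(p-2)}{2p}$, $g(a,r) = \frac12 - \frac{\Lambda}{2}C_4^4 r a - \frac{2|\lambda_3|}{p} C_p^p a^{p(1-\gamma_p)} r^{p\gamma_p - 2}$, $r_a$ the unique maximum point of $g(a,\cdot)$), there exists a constant $\alpha > 0$, independent of $a$, such that $\max_{r>0} g(a,r) = g(a, r_a) = \frac12 - \alpha\, a^{4/3}$ for all $a>0$. -/

import Mathlib

open Set

/-- Key AM-GM inequality: for `s, t > 0`, `s + 1 ≤ s*t + t^(-s)`. -/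
lemma amgm_key (s t : ℝ) (hs : 0 < s) (ht : 0 < t) : s + 1 ≤ s * t + t ^ (-s) := by
  have hs1 : 0 < s + 1 := by linarith
  have h := Real.geom_mean_le_arith_mean2_weighted
    (w₁ := s / (s + 1)) (w₂ := 1 / (s + 1)) (p₁ := t) (p₂ := t ^ (-s))
    (by positivity) (by positivity) ht.le (Real.rpow_pos_of_pos ht _).le
    (by field_simp)
  have hmean : t ^ (s / (s + 1)) * (t ^ (-s)) ^ (1 / (s + 1)) = 1 := by
    rw [← Real.rpow_mul ht.le, ← Real.rpow_add ht]
    rw [show s / (s + 1) + -s * (1 / (s + 1)) = 0 by (field_simp; ring), Real.rpow_zero]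
  rw [hmean] at h
  have := mul_le_mul_of_nonneg_left h hs1.le
  calc s + 1 = (s + 1) * 1 := by ring
    _ ≤ (s + 1) * (s / (s + 1) * t + 1 / (s + 1) * t ^ (-s)) := this
    _ = s * t + t ^ (-s) := by field_simp

/-- with `r_a` the unique maximum point of `g(a,·)`, there exists a constant
`α > 0`, independent of `a`, such that `max_{r>0} g(a,r) = g(a,r_a) = 1/2 - α a^{4/3}`
for all `a > 0`. -/
theorem stmt3 (Λ C4 Cp l3 p γp : ℝ) (g : ℝ → ℝ → ℝ) (ra : ℝ → ℝ)
    (hΛ : 0 < Λ) (hC4 : 0 < C4) (hCp : 0 < Cp) (hl3 : 0 < l3)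
    (hp1 : 2 < p) (hp2 : p < 10 / 3)
    (hγ : γp = 3 * (p - 2) / (2 * p))
    (hg : g = fun a r => 1 / 2 - Λ / 2 * C4 ^ 4 * r * a
      - 2 * l3 / p * Cp ^ p * a ^ (p * (1 - γp)) * r ^ (p * γp - 2))
    (hra : ∀ a : ℝ, 0 < a → ra a = (4 * l3 * (2 - p * γp) * Cp ^ p * a ^ ((1 - γp) * p - 1)
      / (Λ * C4 ^ 4 * p)) ^ (1 / (3 - p * γp))) :
    ∃ α : ℝ, 0 < α ∧ ∀ a : ℝ, 0 < a →
      (∀ r : ℝ, 0 < r → g a r ≤ g a (ra a)) ∧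
      g a (ra a) = 1 / 2 - α * a ^ ((4 : ℝ) / 3) := by
  have hp0 : (0:ℝ) < p := by linarith
  have hpγ : p * γp = 3 * (p - 2) / 2 := by rw [hγ]; field_simp
  set s : ℝ := 2 - p * γp with hsdef
  have hs : 0 < s := by rw [hsdef, hpγ]; linarith
  have hs1 : (0:ℝ) < 1 + s := by linarith
  have h3 : 3 - p * γp = 1 + s := by rw [hsdef]; ring
  set A : ℝ := Λ / 2 * C4 ^ 4 with hAdef
  set B : ℝ := 2 * l3 / p * Cp ^ p with hBdef
  have hA : 0 < A := by positivity
  have hB : 0 < B := by positivity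
  set C : ℝ := 4 * l3 * s * Cp ^ p / (Λ * C4 ^ 4 * p) with hCdef
  have hC : 0 < C := by positivity
  set K : ℝ := C ^ (1 / (1 + s)) with hKdef
  have hK : 0 < K := Real.rpow_pos_of_pos hC _
  have hKs : 0 < K ^ (-s) := Real.rpow_pos_of_pos hK _
  have hK1s : K ^ (1 + s) = C := by
    rw [hKdef, ← Real.rpow_mul hC.le, one_div_mul_cancel (ne_of_gt hs1), Real.rpow_one]
  have hKsC : K ^ (-s) = K * C⁻¹ := by
    rw [show -s = 1 + -(1 + s) by ring, Real.rpow_add hK, Real.rpow_one,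
      Real.rpow_neg hK.le, hK1s]
  -- critical relation
  have hAK : A * K = s * (B * K ^ (-s)) := by
    rw [hKsC, hCdef, hAdef, hBdef]
    field_simp
    ring
  have he : (1 - γp) * p - 1 = (1 + s) / 3 := by
    rw [hsdef]; linear_combination (-2/3 : ℝ) * hpγ
  have hm43 : p * (1 - γp) + -(s / 3) = (4:ℝ)/3 := by
    rw [hsdef]; linear_combination (-2/3 : ℝ) * hpγ
  refine ⟨A * K + B * K ^ (-s), by positivity, fun a ha => ?_⟩
  have hR : ra a = K * a ^ ((1:ℝ)/3) := by
    rw [hra a ha, h3]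
    have h1 : 4 * l3 * s * Cp ^ p * a ^ ((1 - γp) * p - 1) / (Λ * C4 ^ 4 * p)
        = C * a ^ ((1 + s) / 3) := by rw [he, hCdef]; ring
    rw [h1, Real.mul_rpow hC.le (Real.rpow_pos_of_pos ha _).le,
      ← Real.rpow_mul ha.le, ← hKdef]
    have hexp13 : (1 + s) / 3 * (1 / (1 + s)) = 1 / 3 := by
      field_simp
    rw [hexp13]
  have ha13 : (0:ℝ) < a ^ ((1:ℝ)/3) := Real.rpow_pos_of_pos ha _
  have ha43 : a ^ ((1:ℝ)/3) * a = a ^ ((4:ℝ)/3) := by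
    rw [show ((4:ℝ)/3) = 1/3 + 1 by norm_num, Real.rpow_add ha, Real.rpow_one]
  have hms : a ^ (p * (1 - γp)) * a ^ (-(s/3)) = a ^ ((4:ℝ)/3) := by
    rw [← Real.rpow_add ha, hm43]
  have ha3s : (a ^ ((1:ℝ)/3)) ^ (-s) = a ^ (-(s/3)) := by
    rw [← Real.rpow_mul ha.le]; congr 1; ring
  have hq : p * γp - 2 = -s := by rw [hsdef]; ring
  -- value at the maximum point
  have hval : g a (ra a) = 1 / 2 - (A * K + B * K ^ (-s)) * a ^ ((4:ℝ)/3) := by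
    rw [hg]
    simp only
    rw [hR, hq, Real.mul_rpow hK.le ha13.le, ha3s]
    calc 1 / 2 - A * (K * a ^ ((1:ℝ)/3)) * a
          - B * a ^ (p * (1 - γp)) * (K ^ (-s) * a ^ (-(s/3)))
        = 1 / 2 - A * K * (a ^ ((1:ℝ)/3) * a)
          - B * K ^ (-s) * (a ^ (p * (1 - γp)) * a ^ (-(s/3))) := by ring
      _ = 1 / 2 - (A * K + B * K ^ (-s)) * a ^ ((4:ℝ)/3) := by rw [ha43, hms]; ring
  refine ⟨fun r hr => ?_, hval⟩
  rw [hval, hg]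
  simp only
  set t : ℝ := r / (K * a ^ ((1:ℝ)/3)) with htdef
  have ht : 0 < t := by positivity
  have hrt : r = K * a ^ ((1:ℝ)/3) * t := by
    rw [htdef]; field_simp
  have hts : 0 < t ^ (-s) := Real.rpow_pos_of_pos ht _
  have hexp : A * r * a + B * a ^ (p * (1 - γp)) * r ^ (p * γp - 2)
      = (A * K * t + B * K ^ (-s) * t ^ (-s)) * a ^ ((4:ℝ)/3) := by
    rw [hq, hrt, Real.mul_rpow (by positivity) ht.le,
      Real.mul_rpow hK.le ha13.le, ha3s]
    calc A * (K * a ^ ((1:ℝ)/3) * t) * a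
          + B * a ^ (p * (1 - γp)) * (K ^ (-s) * a ^ (-(s/3)) * t ^ (-s))
        = A * K * t * (a ^ ((1:ℝ)/3) * a)
          + B * K ^ (-s) * t ^ (-s) * (a ^ (p * (1 - γp)) * a ^ (-(s/3))) := by ring
      _ = _ := by rw [ha43, hms]; ring
  have key := amgm_key s t hs ht
  have h1 : A * K + B * K ^ (-s) ≤ A * K * t + B * K ^ (-s) * t ^ (-s) := by
    rw [hAK]
    calc s * (B * K ^ (-s)) + B * K ^ (-s) = (B * K ^ (-s)) * (s + 1) := by ring
      _ ≤ (B * K ^ (-s)) * (s * t + t ^ (-s)) :=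
        mul_le_mul_of_nonneg_left key (by positivity)
      _ = s * (B * K ^ (-s)) * t + B * K ^ (-s) * t ^ (-s) := by ring
  have h2 : (A * K + B * K ^ (-s)) * a ^ ((4:ℝ)/3)
      ≤ A * r * a + B * a ^ (p * (1 - γp)) * r ^ (p * γp - 2) := by
    rw [hexp]
    exact mul_le_mul_of_nonneg_right h1 (by positivity)
  linarith
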